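/- Let 0 < β < 1 and let s : ℕ → ℝ satisfy |s(k+1) + β·s(k)| ≤ M for all k and some M ≥ 0. Then limsup_{k→∞} |s(k)| ≤ M/(1 − β). -/
import Mathlib

theorem stmt_16 (β M : ℝ) (h0 : 0 < β) (h1 : β < 1) (hM : 0 ≤ M)
    (s : ℕ → ℝ) (hb : ∀ k, |s (k + 1) + β * s k| ≤ M) :
    Filter.limsup (fun k => |s k|) Filter.atTop ≤ M / (1 - β) := by
  have hβ1 : (0:ℝ) < 1 - β := by linarith
  have hMd : 0 ≤ M / (1 - β) := div_nonneg hM hβ1.le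
  have key : ∀ k, |s k| ≤ β ^ k * |s 0| + M / (1 - β) := by
    intro k
    induction k with
    | zero => simpa using hMd
    | succ k ih =>
      have h := hb k
      have h2 : |s (k + 1)| ≤ M + β * |s k| := by
        calc |s (k + 1)| = |(s (k + 1) + β * s k) - β * s k| := by ring_nf
          _ ≤ |s (k + 1) + β * s k| + |β * s k| := abs_sub _ _
          _ ≤ M + β * |s k| := by
              rw [abs_mul, abs_of_pos h0]; linarith
      have hid : M + β * (M / (1 - β)) = M / (1 - β) := by
        field_simp; ring
      have : |s (k + 1)| ≤ M + β * (β ^ k * |s 0| + M / (1 - β)) :=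
        h2.trans (by nlinarith)
      calc |s (k + 1)| ≤ M + β * (β ^ k * |s 0| + M / (1 - β)) := this
        _ = β ^ (k + 1) * |s 0| + (M + β * (M / (1 - β))) := by ring
        _ = β ^ (k + 1) * |s 0| + M / (1 - β) := by rw [hid]
  have htend : Filter.Tendsto (fun k => β ^ k * |s 0| + M / (1 - β))
      Filter.atTop (nhds (M / (1 - β))) := by
    have := ((tendsto_pow_atTop_nhds_zero_of_lt_one h0.le h1).mul_const (|s 0|)).add
      (tendsto_const_nhds (α := ℕ) (x := M / (1 - β)))
    simpa using this
  have hle := Filter.limsup_le_limsup (Filter.Eventually.of_forall key)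
    (Filter.isCoboundedUnder_le_of_le Filter.atTop (fun k => abs_nonneg (s k)))
    (htend.isBoundedUnder_le)
  rwa [htend.limsup_eq] at hle
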